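/- Let n ≥ 2, let p ∈ (0,1), and let k be an integer with 1 ≤ k ≤ n and k < (n−1)p. Then there exists a pairwise independent distribution θ with all marginal probabilities equal to p such that P_θ(∑_{i=1}^n c_i ≥ k) = 1; hence the maximum of P_θ(∑_{i=1}^n c_i ≥ k) over all such distributions equals 1. -/

import Mathlib

open Finset

noncomputable section

/-- Probability that at least `k` of the `n` coordinates equal `1` under the pmf `θ` on `{0,1}^n`. -/
def probGE (n : ℕ) (θ : (Fin n → Bool) → ℝ) (k : ℕ) : ℝ :=
  ∑ c ∈ Finset.univ.filter
      (fun c : Fin n → Bool => k ≤ (Finset.univ.filter (fun i => c i = true)).card), θ c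

/-- Probability that all `n` coordinates equal `1` under the pmf `θ` on `{0,1}^n`. -/
def probAll (n : ℕ) (θ : (Fin n → Bool) → ℝ) : ℝ :=
  ∑ c ∈ Finset.univ.filter (fun c : Fin n → Bool => ∀ i, c i = true), θ c

/-- `θ` is a probability mass function on `{0,1}^n`. -/
def IsDist (n : ℕ) (θ : (Fin n → Bool) → ℝ) : Prop :=
  (∀ c, 0 ≤ θ c) ∧ (∑ c, θ c = 1)

/-- Univariate marginal probability `P_θ(c_i = 1)`. -/
def Marg (n : ℕ) (θ : (Fin n → Bool) → ℝ) (i : Fin n) : ℝ :=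
  ∑ c ∈ Finset.univ.filter (fun c : Fin n → Bool => c i = true), θ c

/-- Bivariate probability `P_θ(c_i = 1, c_j = 1)`. -/
def Biv (n : ℕ) (θ : (Fin n → Bool) → ℝ) (i j : Fin n) : ℝ :=
  ∑ c ∈ Finset.univ.filter (fun c : Fin n → Bool => c i = true ∧ c j = true), θ c

/-- `θ` is a pairwise independent distribution with marginal vector `p`. -/
def PairwiseIndep (n : ℕ) (p : Fin n → ℝ) (θ : (Fin n → Bool) → ℝ) : Prop :=
  IsDist n θ ∧ (∀ i, Marg n θ i = p i) ∧
    (∀ i j : Fin n, i < j → Biv n θ i j = p i * p j)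


def boolEquiv (n : ℕ) : Finset (Fin n) ≃ (Fin n → Bool) where
  toFun s := fun i => decide (i ∈ s)
  invFun c := univ.filter (fun i => c i = true)
  left_inv s := by ext i; simp
  right_inv c := by funext i; by_cases h : c i = true <;> simp [h]

-- step 1: sum over finsets containing a
lemma finset_count (n : ℕ) (a : Finset (Fin n)) (f : ℕ → ℝ) :
    ∑ s ∈ (univ : Finset (Finset (Fin n))).filter (fun s => a ⊆ s), f s.card
      = ∑ j ∈ range (n - a.card + 1), ((n - a.card).choose j : ℝ) * f (j + a.card) := by
  have h1 : ∑ s ∈ (univ : Finset (Finset (Fin n))).filter (fun s => a ⊆ s), f s.card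
      = ∑ t ∈ (univ \ a).powerset, f (t.card + a.card) := by
    refine Finset.sum_nbij' (fun s => s \ a) (fun t => t ∪ a) ?_ ?_ ?_ ?_ ?_
    · intro s hs
      simp only [mem_filter, mem_univ, true_and] at hs
      simp only [mem_powerset]
      exact sdiff_subset_sdiff (subset_univ s) (le_refl a)
    · intro t ht
      simp only [mem_powerset] at ht
      simp only [mem_filter, mem_univ, true_and]
      exact subset_union_right
    · intro s hs
      simp only [mem_filter, mem_univ, true_and] at hs
      exact sdiff_union_of_subset hs
    · intro t ht
      simp only [mem_powerset] at ht
      have : Disjoint t a := disjoint_left.2 fun x hx => by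
        have := ht hx; simp only [mem_sdiff] at this; exact this.2
      rw [union_sdiff_cancel_right this]
    · intro s hs
      simp only [mem_filter, mem_univ, true_and] at hs
      rw [card_sdiff_add_card_eq_card hs]
  rw [h1, Finset.sum_powerset]
  have hcard : (univ \ a).card = n - a.card := by
    rw [card_sdiff_of_subset (subset_univ a), card_univ, Fintype.card_fin]
  rw [hcard]
  refine Finset.sum_congr rfl fun j hj => ?_
  have : ∑ t ∈ (univ \ a).powersetCard j, f (t.card + a.card)
      = ∑ t ∈ (univ \ a).powersetCard j, f (j + a.card) := by
    refine Finset.sum_congr rfl fun t ht => ?_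
    rw [(mem_powersetCard.1 ht).2]
  rw [this, Finset.sum_const, card_powersetCard, hcard, nsmul_eq_mul]

lemma bool_count (n : ℕ) (a : Finset (Fin n)) (f : ℕ → ℝ) :
    ∑ c ∈ (univ : Finset (Fin n → Bool)).filter (fun c => ∀ i ∈ a, c i = true),
        f ((univ.filter (fun i => c i = true)).card)
      = ∑ j ∈ range (n - a.card + 1), ((n - a.card).choose j : ℝ) * f (j + a.card) := by
  rw [← finset_count n a f]
  refine Finset.sum_equiv (boolEquiv n).symm ?_ ?_
  · intro c
    simp only [mem_filter, mem_univ, true_and, boolEquiv, Equiv.coe_fn_symm_mk]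
    constructor
    · intro h i hi
      have := h i hi
      simp [this]
    · intro h i hi
      have := h hi
      simp only [mem_filter, mem_univ, true_and] at this
      exact this
  · intro c hc
    rfl

-- the exchangeable pmf with weight distribution q
noncomputable def exch (n : ℕ) (q : ℕ → ℝ) : (Fin n → Bool) → ℝ :=
  fun c => q ((univ.filter (fun i => c i = true)).card)
    / (n.choose ((univ.filter (fun i => c i = true)).card) : ℝ)

lemma choose_id1 {n j : ℕ} (hn : 1 ≤ n) :
    (n : ℝ) * ((n-1).choose j : ℝ) = (n.choose (j+1) : ℝ) * (j+1) := by
  have h := Nat.add_one_mul_choose_eq (n-1) j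
  rw [Nat.sub_add_cancel hn] at h
  exact_mod_cast congrArg (Nat.cast : ℕ → ℝ) h

lemma choose_id2 {n j : ℕ} (hn : 2 ≤ n) :
    (n : ℝ) * ((n:ℝ) - 1) * ((n-2).choose j : ℝ)
      = (n.choose (j+2) : ℝ) * ((j+2) * (j+1)) := by
  have h1 : (1:ℕ) ≤ n - 1 := by omega
  have e : n - 1 - 1 = n - 2 := by omega
  have h2 := choose_id1 (n := n-1) (j := j) h1
  rw [e] at h2
  have h3 := choose_id1 (n := n) (j := j+1) (by omega)
  have hc : ((n - 1 : ℕ) : ℝ) = (n:ℝ) - 1 := by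
    have : (1:ℕ) ≤ n := by omega
    push_cast [Nat.cast_sub this]
    ring
  rw [hc] at h2
  calc (n : ℝ) * ((n:ℝ) - 1) * ((n-2).choose j : ℝ)
      = (n:ℝ) * (((n:ℝ)-1) * ((n-2).choose j : ℝ)) := by ring
    _ = (n:ℝ) * (((n-1).choose (j+1) : ℝ) * (j+1)) := by rw [h2]
    _ = ((n:ℝ) * ((n-1).choose (j+1) : ℝ)) * (j+1) := by ring
    _ = ((n.choose (j+1+1) : ℝ) * (j+1+1)) * (j+1) := by rw [h3]; push_cast; ring
    _ = (n.choose (j+2) : ℝ) * ((j+2) * (j+1)) := by push_cast; ring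

lemma sum_exch (n : ℕ) (q : ℕ → ℝ) :
    ∑ c, exch n q c = ∑ j ∈ range (n+1), q j := by
  have h0 : (univ : Finset (Fin n → Bool))
      = univ.filter (fun c => ∀ i ∈ (∅ : Finset (Fin n)), c i = true) := by
    simp
  rw [h0]
  simp only [exch]
  have := bool_count n ∅ (fun j => q j / (n.choose j : ℝ))
  simp only [card_empty, Nat.sub_zero, add_zero] at this
  rw [this]
  refine Finset.sum_congr rfl fun j hj => ?_
  have hj' : j ≤ n := by simpa [Nat.lt_succ_iff] using mem_range.1 hj
  have hne : (n.choose j : ℝ) ≠ 0 := Nat.cast_ne_zero.2 (Nat.choose_pos hj').ne'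
  field_simp

lemma marg_exch (n : ℕ) (hn : 1 ≤ n) (q : ℕ → ℝ) (i : Fin n) :
    Marg n (exch n q) i = (∑ j ∈ range (n+1), (j:ℝ) * q j) / n := by
  unfold Marg
  have h0 : (univ : Finset (Fin n → Bool)).filter (fun c => c i = true)
      = univ.filter (fun c => ∀ i' ∈ ({i} : Finset (Fin n)), c i' = true) := by
    simp
  rw [h0]
  simp only [exch]
  have := bool_count n {i} (fun j => q j / (n.choose j : ℝ))
  simp only [card_singleton] at this
  rw [this]
  have hnR : (n:ℝ) ≠ 0 := by positivity
  rw [eq_div_iff hnR, Finset.sum_mul]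
  have hsplit : ∑ j ∈ range (n+1), (j:ℝ) * q j
      = ∑ j ∈ range n, ((j+1:ℕ):ℝ) * q (j+1) := by
    rw [Finset.sum_range_succ' (fun j => (j:ℝ) * q j) n]
    simp
  rw [hsplit]
  have hrange : n - 1 + 1 = n := Nat.sub_add_cancel hn
  rw [hrange]
  refine Finset.sum_congr rfl fun j hj => ?_
  have hj' : j + 1 ≤ n := by have := mem_range.1 hj; omega
  have hne : (n.choose (j+1) : ℝ) ≠ 0 :=
    Nat.cast_ne_zero.2 (Nat.choose_pos hj').ne'
  have := choose_id1 (n := n) (j := j) hn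
  field_simp
  push_cast
  linear_combination q (j+1) * this

lemma biv_exch (n : ℕ) (hn : 2 ≤ n) (q : ℕ → ℝ) (i j : Fin n) (hij : i ≠ j) :
    Biv n (exch n q) i j
      = (∑ l ∈ range (n+1), (l:ℝ) * ((l:ℝ) - 1) * q l) / ((n:ℝ) * ((n:ℝ)-1)) := by
  unfold Biv
  have h0 : (univ : Finset (Fin n → Bool)).filter (fun c => c i = true ∧ c j = true)
      = univ.filter (fun c => ∀ i' ∈ ({i, j} : Finset (Fin n)), c i' = true) := by
    ext c; simp [and_comm]
  rw [h0]
  simp only [exch]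
  have hcard : ({i, j} : Finset (Fin n)).card = 2 := by
    rw [card_insert_of_notMem (by simpa using hij), card_singleton]
  have := bool_count n {i, j} (fun l => q l / (n.choose l : ℝ))
  rw [hcard] at this
  rw [this]
  have hnR : (n:ℝ) * ((n:ℝ)-1) ≠ 0 := by
    have : (2:ℝ) ≤ (n:ℝ) := by exact_mod_cast hn
    nlinarith
  rw [eq_div_iff hnR, Finset.sum_mul]
  have g0 : ((0:ℕ):ℝ) * (((0:ℕ):ℝ) - 1) * q 0 = 0 := by norm_num
  have hsplit1 : ∑ l ∈ range (n+1), (l:ℝ) * ((l:ℝ) - 1) * q l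
      = ∑ l ∈ range n, ((l+1:ℕ):ℝ) * (((l+1:ℕ):ℝ) - 1) * q (l+1) := by
    rw [Finset.sum_range_succ' (fun l => (l:ℝ) * ((l:ℝ) - 1) * q l) n, g0, add_zero]
  have hn1 : n - 1 + 1 = n := by omega
  have hsplit2 : ∑ l ∈ range n, ((l+1:ℕ):ℝ) * (((l+1:ℕ):ℝ) - 1) * q (l+1)
      = ∑ l ∈ range (n-1), ((l+2:ℕ):ℝ) * (((l+2:ℕ):ℝ) - 1) * q (l+2) := by
    rw [← hn1, Finset.sum_range_succ' (fun l => ((l+1:ℕ):ℝ) * (((l+1:ℕ):ℝ) - 1) * q (l+1)) (n-1)]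
    norm_num
    refine Finset.sum_congr rfl fun x _ => ?_
    push_cast
    ring
  rw [hsplit1, hsplit2]
  have hrange : n - 2 + 1 = n - 1 := by omega
  rw [hrange]
  refine Finset.sum_congr rfl fun l hl => ?_
  have hl' : l + 2 ≤ n := by have := mem_range.1 hl; omega
  have hne : (n.choose (l+2) : ℝ) ≠ 0 := Nat.cast_ne_zero.2 (Nat.choose_pos hl').ne'
  have hid := choose_id2 (n := n) (j := l) hn
  field_simp
  push_cast
  linear_combination q (l+2) * hid

lemma q_exists (n k : ℕ) (hn : 2 ≤ n) (hk1 : 1 ≤ k) (p : ℝ)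
    (hp0 : 0 < p) (hp1 : p < 1) (hk : (k:ℝ) < ((n:ℝ)-1)*p) :
    ∃ q : ℕ → ℝ, (∀ j, 0 ≤ q j) ∧ (∀ j, j < k → q j = 0) ∧
      (∑ j ∈ range (n+1), q j = 1) ∧
      (∑ j ∈ range (n+1), (j:ℝ) * q j = (n:ℝ) * p) ∧
      (∑ j ∈ range (n+1), (j:ℝ) * ((j:ℝ)-1) * q j = (n:ℝ)*((n:ℝ)-1)*p^2) := by
  have hn2 : (2:ℝ) ≤ (n:ℝ) := by exact_mod_cast hn
  have hn0 : (0:ℝ) < (n:ℝ) := by linarith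
  have hkx : (k:ℝ) < (n:ℝ)*p := by nlinarith
  have hxn : (n:ℝ)*p < (n:ℝ) := by nlinarith
  have hx0 : (0:ℝ) ≤ (n:ℝ)*p := by positivity
  obtain ⟨m, hkm, hmn, hmx1, hmx2⟩ :
      ∃ m : ℕ, k ≤ m ∧ m < n ∧ (m:ℝ) ≤ (n:ℝ)*p ∧ (n:ℝ)*p < (m:ℝ)+1 := by
    refine ⟨⌊(n:ℝ)*p⌋₊, Nat.le_floor hkx.le, (Nat.floor_lt hx0).2 hxn,
      Nat.floor_le hx0, ?_⟩
    exact_mod_cast Nat.lt_floor_add_one ((n:ℝ)*p)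
  set x : ℝ := (n:ℝ) * p with hx
  set t : ℝ := x - (m:ℝ) with ht
  have ht0 : 0 ≤ t := by simp only [ht]; linarith
  have ht1 : t < 1 := by simp only [ht]; linarith
  have hkmR : (k:ℝ) ≤ (m:ℝ) := by exact_mod_cast hkm
  have hmnR : (m:ℝ) ≤ (n:ℝ) - 1 := by
    have : (m:ℝ) + 1 ≤ (n:ℝ) := by exact_mod_cast hmn
    linarith
  have hm0 : (0:ℝ) ≤ (m:ℝ) := Nat.cast_nonneg m
  set v : ℝ := t * (1 - t) with hv
  set σ2 : ℝ := x * (1 - p) with hσ2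
  set M : ℝ := (x - (k:ℝ)) * ((n:ℝ) - x) with hM
  have hknR : (k:ℝ) < (n:ℝ) := lt_trans hkx hxn
  have hnk0 : (0:ℝ) < (n:ℝ) - (k:ℝ) := by linarith
  have haux : 0 ≤ (n:ℝ) * (σ2 - v) := by
    have h1 : 0 ≤ (m:ℝ) * ((n:ℝ) - 1 - (m:ℝ)) := mul_nonneg hm0 (by linarith)
    have h2 : 0 ≤ (m:ℝ) * (1 - t)^2 := mul_nonneg hm0 (sq_nonneg _)
    have h3 : 0 ≤ ((n:ℝ) - 1 - (m:ℝ)) * t^2 := mul_nonneg (by linarith) (sq_nonneg _)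
    have hid : (n:ℝ) * (σ2 - v)
        = (m:ℝ) * ((n:ℝ) - 1 - (m:ℝ)) + (m:ℝ) * (1 - t)^2 + ((n:ℝ) - 1 - (m:ℝ)) * t^2 := by
      rw [hσ2, hv, ht, hx]; ring
    rw [hid]; linarith
  have hvσ : v ≤ σ2 := by nlinarith
  have hσM : σ2 < M := by
    have h1 : p < x - (k:ℝ) := by
      have : ((n:ℝ)-1)*p + p = (n:ℝ)*p := by ring
      simp only [hx]; linarith
    have h2 : (0:ℝ) < (n:ℝ) - x := by simp only [hx]; linarith
    have h3 : σ2 = p * ((n:ℝ) - x) := by rw [hσ2, hx]; ring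
    rw [h3, hM]
    exact mul_lt_mul_of_pos_right h1 h2
  have hMv : 0 < M - v := by linarith
  set α : ℝ := (M - σ2)/(M - v) with hα
  set β : ℝ := (σ2 - v)/(M - v) with hβ
  have hα0 : 0 ≤ α := div_nonneg (by linarith) (by linarith)
  have hβ0 : 0 ≤ β := div_nonneg (by linarith) (by linarith)
  have hαβ : α + β = 1 := by rw [hα, hβ]; field_simp; ring
  have hαβv : α * v + β * M = σ2 := by
    rw [hα, hβ]; field_simp; ring
  have hkn : k ≤ n := by exact_mod_cast hknR.le
  refine ⟨fun j => α*(if j = m then 1-t else 0) + α*(if j = m+1 then t else 0)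
      + β*(if j = k then ((n:ℝ)-x)/((n:ℝ)-(k:ℝ)) else 0)
      + β*(if j = n then (x-(k:ℝ))/((n:ℝ)-(k:ℝ)) else 0), ?_, ?_, ?_, ?_, ?_⟩
  · intro j
    have c1 : (0:ℝ) ≤ 1 - t := by linarith
    have c3 : (0:ℝ) ≤ ((n:ℝ)-x)/((n:ℝ)-(k:ℝ)) := div_nonneg (by linarith) (by linarith)
    have c4 : (0:ℝ) ≤ (x-(k:ℝ))/((n:ℝ)-(k:ℝ)) := div_nonneg (by linarith) (by linarith)
    exact add_nonneg (add_nonneg (add_nonneg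
      (mul_nonneg hα0 (ite_nonneg c1 le_rfl)) (mul_nonneg hα0 (ite_nonneg ht0 le_rfl)))
      (mul_nonneg hβ0 (ite_nonneg c3 le_rfl))) (mul_nonneg hβ0 (ite_nonneg c4 le_rfl))
  · intro j hj
    have e1 : j ≠ m := by omega
    have e2 : j ≠ m + 1 := by omega
    have e3 : j ≠ k := by omega
    have e4 : j ≠ n := by omega
    simp only [if_neg e1, if_neg e2, if_neg e3, if_neg e4, mul_zero, add_zero]
  · have key : ∀ w : ℕ → ℝ,
        ∑ j ∈ range (n+1), w j * (α*(if j = m then 1-t else 0)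
            + α*(if j = m+1 then t else 0)
            + β*(if j = k then ((n:ℝ)-x)/((n:ℝ)-(k:ℝ)) else 0)
            + β*(if j = n then (x-(k:ℝ))/((n:ℝ)-(k:ℝ)) else 0))
          = α*(w m * (1-t)) + α*(w (m+1) * t)
            + β*(w k * (((n:ℝ)-x)/((n:ℝ)-(k:ℝ))))
            + β*(w n * ((x-(k:ℝ))/((n:ℝ)-(k:ℝ)))) := by
      intro w
      have h1 : ∀ (a : ℕ), a ≤ n → ∀ (c γ : ℝ),
          ∑ j ∈ range (n+1), w j * (γ * (if j = a then c else 0)) = γ * (w a * c) := by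
        intro a ha c γ
        have hterm : ∀ j, w j * (γ * (if j = a then c else 0))
            = γ * (if j = a then w j * c else 0) := by
          intro j; split_ifs with h <;> simp [h] <;> ring
        rw [Finset.sum_congr rfl (fun j _ => hterm j), ← Finset.mul_sum,
            Finset.sum_ite_eq' (range (n+1)) a (fun j => w j * c),
            if_pos (mem_range.2 (by omega))]
      simp only [mul_add]
      rw [Finset.sum_add_distrib, Finset.sum_add_distrib, Finset.sum_add_distrib,
          h1 m (by omega) (1-t) α, h1 (m+1) (by omega) t α,
          h1 k hkn _ β, h1 n le_rfl _ β]
    have hc : ((n:ℝ)-x)/((n:ℝ)-(k:ℝ)) + (x-(k:ℝ))/((n:ℝ)-(k:ℝ)) = 1 := by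
      field_simp; ring
    have := key (fun _ => 1)
    simp only [one_mul] at this
    calc ∑ j ∈ range (n+1), (α*(if j = m then 1-t else 0)
            + α*(if j = m+1 then t else 0)
            + β*(if j = k then ((n:ℝ)-x)/((n:ℝ)-(k:ℝ)) else 0)
            + β*(if j = n then (x-(k:ℝ))/((n:ℝ)-(k:ℝ)) else 0))
        = ∑ j ∈ range (n+1), (1:ℝ) * (α*(if j = m then 1-t else 0)
            + α*(if j = m+1 then t else 0)
            + β*(if j = k then ((n:ℝ)-x)/((n:ℝ)-(k:ℝ)) else 0)
            + β*(if j = n then (x-(k:ℝ))/((n:ℝ)-(k:ℝ)) else 0)) := by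
          simp only [one_mul]
      _ = 1 := by
          rw [key (fun _ => 1)]
          linear_combination hαβ + β * hc
  · have key : ∀ w : ℕ → ℝ,
        ∑ j ∈ range (n+1), w j * (α*(if j = m then 1-t else 0)
            + α*(if j = m+1 then t else 0)
            + β*(if j = k then ((n:ℝ)-x)/((n:ℝ)-(k:ℝ)) else 0)
            + β*(if j = n then (x-(k:ℝ))/((n:ℝ)-(k:ℝ)) else 0))
          = α*(w m * (1-t)) + α*(w (m+1) * t)
            + β*(w k * (((n:ℝ)-x)/((n:ℝ)-(k:ℝ))))
            + β*(w n * ((x-(k:ℝ))/((n:ℝ)-(k:ℝ)))) := by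
      intro w
      have h1 : ∀ (a : ℕ), a ≤ n → ∀ (c γ : ℝ),
          ∑ j ∈ range (n+1), w j * (γ * (if j = a then c else 0)) = γ * (w a * c) := by
        intro a ha c γ
        have hterm : ∀ j, w j * (γ * (if j = a then c else 0))
            = γ * (if j = a then w j * c else 0) := by
          intro j; split_ifs with h <;> simp [h] <;> ring
        rw [Finset.sum_congr rfl (fun j _ => hterm j), ← Finset.mul_sum,
            Finset.sum_ite_eq' (range (n+1)) a (fun j => w j * c),
            if_pos (mem_range.2 (by omega))]
      simp only [mul_add]
      rw [Finset.sum_add_distrib, Finset.sum_add_distrib, Finset.sum_add_distrib,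
          h1 m (by omega) (1-t) α, h1 (m+1) (by omega) t α,
          h1 k hkn _ β, h1 n le_rfl _ β]
    rw [key (fun j => (j:ℝ))]
    have hb1 : (k:ℝ)*(((n:ℝ)-x)/((n:ℝ)-(k:ℝ))) + (n:ℝ)*((x-(k:ℝ))/((n:ℝ)-(k:ℝ))) = x := by
      field_simp; ring
    push_cast
    linear_combination x*hαβ + β*hb1 + α*ht + ((n:ℝ)*p - x) * hαβ + (α+β)*hx
  · have key : ∀ w : ℕ → ℝ,
        ∑ j ∈ range (n+1), w j * (α*(if j = m then 1-t else 0)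
            + α*(if j = m+1 then t else 0)
            + β*(if j = k then ((n:ℝ)-x)/((n:ℝ)-(k:ℝ)) else 0)
            + β*(if j = n then (x-(k:ℝ))/((n:ℝ)-(k:ℝ)) else 0))
          = α*(w m * (1-t)) + α*(w (m+1) * t)
            + β*(w k * (((n:ℝ)-x)/((n:ℝ)-(k:ℝ))))
            + β*(w n * ((x-(k:ℝ))/((n:ℝ)-(k:ℝ)))) := by
      intro w
      have h1 : ∀ (a : ℕ), a ≤ n → ∀ (c γ : ℝ),
          ∑ j ∈ range (n+1), w j * (γ * (if j = a then c else 0)) = γ * (w a * c) := by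
        intro a ha c γ
        have hterm : ∀ j, w j * (γ * (if j = a then c else 0))
            = γ * (if j = a then w j * c else 0) := by
          intro j; split_ifs with h <;> simp [h] <;> ring
        rw [Finset.sum_congr rfl (fun j _ => hterm j), ← Finset.mul_sum,
            Finset.sum_ite_eq' (range (n+1)) a (fun j => w j * c),
            if_pos (mem_range.2 (by omega))]
      simp only [mul_add]
      rw [Finset.sum_add_distrib, Finset.sum_add_distrib, Finset.sum_add_distrib,
          h1 m (by omega) (1-t) α, h1 (m+1) (by omega) t α,
          h1 k hkn _ β, h1 n le_rfl _ β]
    rw [key (fun j => (j:ℝ) * ((j:ℝ)-1))]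
    have hb2 : (k:ℝ)*((k:ℝ)-1)*(((n:ℝ)-x)/((n:ℝ)-(k:ℝ)))
        + (n:ℝ)*((n:ℝ)-1)*((x-(k:ℝ))/((n:ℝ)-(k:ℝ))) = x^2 + M - x := by
      rw [hM]; field_simp; ring
    have hb3 : (m:ℝ)*((m:ℝ)-1)*(1-t) + (((m:ℝ)+1)*((m:ℝ)+1-1))*t = x^2 + v - x := by
      rw [hv, ht]; ring
    have hfin : x^2 - x + σ2 = (n:ℝ)*((n:ℝ)-1)*p^2 := by rw [hσ2, hx]; ring
    push_cast
    linear_combination α*hb3 + β*hb2 + (x^2-x)*hαβ + hαβv + hfin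

theorem stmt_11 (n k : ℕ) (hn : 2 ≤ n) (hk1 : 1 ≤ k) (hkn : k ≤ n)
    (p : ℝ) (hp0 : 0 < p) (hp1 : p < 1)
    (hk : (k : ℝ) < ((n : ℝ) - 1) * p) :
    IsGreatest
      {x : ℝ | ∃ θ : (Fin n → Bool) → ℝ,
        PairwiseIndep n (fun _ => p) θ ∧ probGE n θ k = x} 1 := by
  classical
  obtain ⟨q, hq0, hqk, hS0, hS1, hS2⟩ := q_exists n k hn hk1 p hp0 hp1 hk
  have hn2 : (2:ℝ) ≤ (n:ℝ) := by exact_mod_cast hn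
  have hn0 : (0:ℝ) < (n:ℝ) := by linarith
  have hn1 : (0:ℝ) < (n:ℝ) - 1 := by linarith
  constructor
  · refine ⟨exch n q, ⟨⟨?_, ?_⟩, ?_, ?_⟩, ?_⟩
    · intro c
      unfold exch
      exact div_nonneg (hq0 _) (Nat.cast_nonneg _)
    · rw [sum_exch, hS0]
    · intro i
      rw [Marg, ← Marg, marg_exch n (by omega) q i, hS1]
      field_simp
    · intro i j hij
      rw [Biv, ← Biv, biv_exch n hn q i j (ne_of_lt hij), hS2]
      have hne : (n:ℝ) * ((n:ℝ)-1) ≠ 0 := by positivity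
      field_simp
    · unfold probGE
      have htot : ∑ c, exch n q c = 1 := by rw [sum_exch, hS0]
      rw [← Finset.sum_filter_add_sum_filter_not univ
        (fun c : Fin n → Bool => k ≤ (univ.filter (fun i => c i = true)).card)
        (exch n q)] at htot
      have hzero : ∑ c ∈ univ.filter
          (fun c : Fin n → Bool => ¬ k ≤ (univ.filter (fun i => c i = true)).card),
          exch n q c = 0 := by
        refine Finset.sum_eq_zero fun c hc => ?_
        have hlt := (mem_filter.1 hc).2
        unfold exch
        rw [hqk _ (by omega), zero_div]
      rw [hzero, add_zero] at htot
      exact htot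
  · rintro y ⟨θ, ⟨⟨hθ0, hθsum⟩, _, _⟩, rfl⟩
    unfold probGE
    calc ∑ c ∈ Finset.univ.filter
          (fun c : Fin n → Bool => k ≤ (Finset.univ.filter (fun i => c i = true)).card), θ c
        ≤ ∑ c, θ c :=
          Finset.sum_le_sum_of_subset_of_nonneg (filter_subset _ _) (fun c _ _ => hθ0 c)
      _ = 1 := hθsum
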